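/- arXiv:2404.04554 — 3 statements merged into one kernel-verified Lean document; each statement's English description precedes it below -/
import Mathlib

section
/- If U_A is a unitary matrix of size 2^(s+a) such that ‖A − α (⟨0^a| ⊗ I_s) U_A (|0^a⟩ ⊗ I_s)‖ ≤ δ and U_B is unitary of size 2^(s+b) with ‖B − β (⟨0^b| ⊗ I_s) U_B (|0^b⟩ ⊗ I_s)‖ ≤ ε (α, β > 0), then there exists a unitary W of size 2^(s+max(a,b)+1) such that ‖(A+B) − (α+β) (⟨0^{max(a,b)+1}| ⊗ I_s) W (|0^{max(a,b)+1}⟩ ⊗ I_s)‖ ≤ δ + ε. -/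
open Matrix
open scoped Matrix.Norms.L2Operator Kronecker

lemma reindex_mem_unitaryGroup {n m : Type*} [Fintype n] [DecidableEq n] [Fintype m]
    [DecidableEq m] (e : n ≃ m) {U : Matrix n n ℂ} (hU : U ∈ Matrix.unitaryGroup n ℂ) :
    Matrix.reindex e e U ∈ Matrix.unitaryGroup m ℂ := by
  rw [Matrix.mem_unitaryGroup_iff] at hU ⊢
  have h1 : star (Matrix.reindex e e U) = Matrix.reindex e e (star U) := by
    simp [Matrix.star_eq_conjTranspose, Matrix.conjTranspose_reindex]
  rw [h1]
  simp only [Matrix.reindex_apply, Matrix.submatrix_mul_equiv]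
  rw [hU]
  simp

lemma kronecker_conjT {l n : Type*} (A : Matrix l l ℂ) (B : Matrix n n ℂ) :
    (A ⊗ₖ B)ᴴ = Aᴴ ⊗ₖ Bᴴ := by
  ext ⟨i, k⟩ ⟨j, l'⟩
  simp [Matrix.conjTranspose_apply, Matrix.kroneckerMap_apply]

lemma one_kronecker_mem_unitaryGroup {l n : Type*} [Fintype l] [DecidableEq l] [Fintype n]
    [DecidableEq n] {U : Matrix n n ℂ} (hU : U ∈ Matrix.unitaryGroup n ℂ) :
    (1 : Matrix l l ℂ) ⊗ₖ U ∈ Matrix.unitaryGroup (l × n) ℂ := by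
  rw [Matrix.mem_unitaryGroup_iff] at hU ⊢
  rw [Matrix.star_eq_conjTranspose] at hU
  rw [Matrix.star_eq_conjTranspose, kronecker_conjT, Matrix.conjTranspose_one,
    ← Matrix.mul_kronecker_mul, hU, mul_one, Matrix.one_kronecker_one]

lemma kronecker_one_mem_unitaryGroup {l n : Type*} [Fintype l] [DecidableEq l] [Fintype n]
    [DecidableEq n] {U : Matrix l l ℂ} (hU : U ∈ Matrix.unitaryGroup l ℂ) :
    U ⊗ₖ (1 : Matrix n n ℂ) ∈ Matrix.unitaryGroup (l × n) ℂ := by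
  rw [Matrix.mem_unitaryGroup_iff] at hU ⊢
  rw [Matrix.star_eq_conjTranspose] at hU
  rw [Matrix.star_eq_conjTranspose, kronecker_conjT, Matrix.conjTranspose_one,
    ← Matrix.mul_kronecker_mul, hU, mul_one, Matrix.one_kronecker_one]

lemma blockDiagonal_mem_unitaryGroup {o n : Type*} [Fintype o] [DecidableEq o] [Fintype n]
    [DecidableEq n] {M : o → Matrix n n ℂ} (hM : ∀ c, M c ∈ Matrix.unitaryGroup n ℂ) :
    Matrix.blockDiagonal M ∈ Matrix.unitaryGroup (n × o) ℂ := by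
  rw [Matrix.mem_unitaryGroup_iff]
  rw [Matrix.star_eq_conjTranspose, Matrix.blockDiagonal_conjTranspose,
    ← Matrix.blockDiagonal_mul]
  have : (fun k => M k * (M k)ᴴ) = fun _ => (1 : Matrix n n ℂ) := by
    funext k
    have := (Matrix.mem_unitaryGroup_iff).mp (hM k)
    rwa [Matrix.star_eq_conjTranspose] at this
  rw [this]
  exact Matrix.blockDiagonal_one

/-- Addition of block-encoded matrices (LCU): if `U_A` is an `(α,a,δ)`-block-encoding of `A`
and `U_B` is a `(β,b,ε)`-block-encoding of `B` with `α, β > 0`, then there exists a unitary `W`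
on `s + max a b + 1` qubits which is an `(α+β, max a b + 1, δ+ε)`-block-encoding of `A + B`. -/
theorem stmt_0 (s a b : ℕ) (α β δ ε : ℝ) (hα : 0 < α) (hβ : 0 < β)
    (A B : Matrix (Fin (2 ^ s)) (Fin (2 ^ s)) ℂ)
    (UA : Matrix (Fin (2 ^ a) × Fin (2 ^ s)) (Fin (2 ^ a) × Fin (2 ^ s)) ℂ)
    (UB : Matrix (Fin (2 ^ b) × Fin (2 ^ s)) (Fin (2 ^ b) × Fin (2 ^ s)) ℂ)
    (hUA : UA ∈ Matrix.unitaryGroup (Fin (2 ^ a) × Fin (2 ^ s)) ℂ)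
    (hUB : UB ∈ Matrix.unitaryGroup (Fin (2 ^ b) × Fin (2 ^ s)) ℂ)
    (hA : ‖A - (α : ℂ) •
        Matrix.of (fun i j => UA ((0 : Fin (2 ^ a)), i) ((0 : Fin (2 ^ a)), j))‖ ≤ δ)
    (hB : ‖B - (β : ℂ) •
        Matrix.of (fun i j => UB ((0 : Fin (2 ^ b)), i) ((0 : Fin (2 ^ b)), j))‖ ≤ ε) :
    ∃ W : Matrix (Fin (2 ^ (max a b + 1)) × Fin (2 ^ s))
        (Fin (2 ^ (max a b + 1)) × Fin (2 ^ s)) ℂ,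
      W ∈ Matrix.unitaryGroup (Fin (2 ^ (max a b + 1)) × Fin (2 ^ s)) ℂ ∧
      ‖(A + B) - ((α + β : ℝ) : ℂ) •
        Matrix.of (fun i j =>
          W ((0 : Fin (2 ^ (max a b + 1))), i) ((0 : Fin (2 ^ (max a b + 1))), j))‖ ≤ δ + ε := by
  set m := max a b with hm
  -- index arithmetic
  have hka : (2 : ℕ) ^ (m - a) * 2 ^ a = 2 ^ m := by
    rw [← pow_add, Nat.sub_add_cancel (Nat.le_max_left a b)]
  have hkb : (2 : ℕ) ^ (m - b) * 2 ^ b = 2 ^ m := by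
    rw [← pow_add, Nat.sub_add_cancel (Nat.le_max_right a b)]
  have h2m : 2 * 2 ^ m = 2 ^ (m + 1) := by rw [pow_succ, mul_comm]
  -- equivs
  let ea : Fin (2 ^ (m - a)) × Fin (2 ^ a) ≃ Fin (2 ^ m) := finProdFinEquiv.trans (finCongr hka)
  let eb : Fin (2 ^ (m - b)) × Fin (2 ^ b) ≃ Fin (2 ^ m) := finProdFinEquiv.trans (finCongr hkb)
  have hea0 : ea (0, 0) = 0 := by
    apply Fin.ext
    simp [ea, finProdFinEquiv]
  have heb0 : eb (0, 0) = 0 := by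
    apply Fin.ext
    simp [eb, finProdFinEquiv]
  let ga : Fin (2 ^ (m - a)) × (Fin (2 ^ a) × Fin (2 ^ s)) ≃ Fin (2 ^ m) × Fin (2 ^ s) :=
    (Equiv.prodAssoc _ _ _).symm.trans (ea.prodCongr (Equiv.refl _))
  let gb : Fin (2 ^ (m - b)) × (Fin (2 ^ b) × Fin (2 ^ s)) ≃ Fin (2 ^ m) × Fin (2 ^ s) :=
    (Equiv.prodAssoc _ _ _).symm.trans (eb.prodCongr (Equiv.refl _))
  -- extended unitaries
  let UAm : Matrix (Fin (2 ^ m) × Fin (2 ^ s)) (Fin (2 ^ m) × Fin (2 ^ s)) ℂ :=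
    Matrix.reindex ga ga ((1 : Matrix (Fin (2 ^ (m - a))) (Fin (2 ^ (m - a))) ℂ) ⊗ₖ UA)
  let UBm : Matrix (Fin (2 ^ m) × Fin (2 ^ s)) (Fin (2 ^ m) × Fin (2 ^ s)) ℂ :=
    Matrix.reindex gb gb ((1 : Matrix (Fin (2 ^ (m - b))) (Fin (2 ^ (m - b))) ℂ) ⊗ₖ UB)
  have hUAm : UAm ∈ Matrix.unitaryGroup (Fin (2 ^ m) × Fin (2 ^ s)) ℂ :=
    reindex_mem_unitaryGroup ga (one_kronecker_mem_unitaryGroup hUA)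
  have hUBm : UBm ∈ Matrix.unitaryGroup (Fin (2 ^ m) × Fin (2 ^ s)) ℂ :=
    reindex_mem_unitaryGroup gb (one_kronecker_mem_unitaryGroup hUB)
  have hgas : ∀ i : Fin (2 ^ s), ga.symm (0, i) = (0, (0, i)) := by
    intro i
    apply ga.injective
    rw [Equiv.apply_symm_apply]
    have h : ga (0, (0, i)) = (ea (0, 0), i) := rfl
    rw [h, hea0]
  have hgbs : ∀ i : Fin (2 ^ s), gb.symm (0, i) = (0, (0, i)) := by
    intro i
    apply gb.injective
    rw [Equiv.apply_symm_apply]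
    have h : gb (0, (0, i)) = (eb (0, 0), i) := rfl
    rw [h, heb0]
  have hUAm0 : ∀ i j, UAm (0, i) (0, j) = UA (0, i) (0, j) := by
    intro i j
    simp [UAm, Matrix.reindex_apply, Matrix.submatrix_apply, hgas,
      Matrix.kroneckerMap_apply, Matrix.one_apply]
  have hUBm0 : ∀ i j, UBm (0, i) (0, j) = UB (0, i) (0, j) := by
    intro i j
    simp [UBm, Matrix.reindex_apply, Matrix.submatrix_apply, hgbs,
      Matrix.kroneckerMap_apply, Matrix.one_apply]
  -- select
  let M : Fin 2 → Matrix (Fin (2 ^ m) × Fin (2 ^ s)) (Fin (2 ^ m) × Fin (2 ^ s)) ℂ :=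
    ![UAm, UBm]
  have hM : ∀ c, M c ∈ Matrix.unitaryGroup (Fin (2 ^ m) × Fin (2 ^ s)) ℂ := by
    intro c
    fin_cases c
    · exact hUAm
    · exact hUBm
  let ec : (Fin (2 ^ m) × Fin (2 ^ s)) × Fin 2 ≃ Fin 2 × (Fin (2 ^ m) × Fin (2 ^ s)) :=
    Equiv.prodComm _ _
  let Sel : Matrix (Fin 2 × (Fin (2 ^ m) × Fin (2 ^ s)))
      (Fin 2 × (Fin (2 ^ m) × Fin (2 ^ s))) ℂ :=
    Matrix.reindex ec ec (Matrix.blockDiagonal M)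
  have hSel : Sel ∈ Matrix.unitaryGroup (Fin 2 × (Fin (2 ^ m) × Fin (2 ^ s))) ℂ :=
    reindex_mem_unitaryGroup ec (blockDiagonal_mem_unitaryGroup hM)
  have hSelApp : ∀ (c c' : Fin 2) (y y' : Fin (2 ^ m) × Fin (2 ^ s)),
      Sel (c, y) (c', y') = if c = c' then M c y y' else 0 := by
    intro c c' y y'
    simp [Sel, Matrix.reindex_apply, Matrix.submatrix_apply, ec,
      Matrix.blockDiagonal_apply]
  -- prepare
  set ca : ℝ := Real.sqrt (α / (α + β)) with hca
  set sb : ℝ := Real.sqrt (β / (α + β)) with hsb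
  have hαβ : (0 : ℝ) < α + β := by linarith
  have hca2 : ca * ca = α / (α + β) := Real.mul_self_sqrt (by positivity)
  have hsb2 : sb * sb = β / (α + β) := Real.mul_self_sqrt (by positivity)
  let R : Matrix (Fin 2) (Fin 2) ℂ := !![(ca : ℂ), -(sb : ℂ); (sb : ℂ), (ca : ℂ)]
  have hsum1 : ca * ca + sb * sb = 1 := by
    rw [hca2, hsb2, ← add_div, div_self (ne_of_gt hαβ)]
  have h1C : (ca : ℂ) * ca + (sb : ℂ) * sb = 1 := by exact_mod_cast hsum1
  have hR : R ∈ Matrix.unitaryGroup (Fin 2) ℂ := by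
    rw [Matrix.mem_unitaryGroup_iff', Matrix.star_eq_conjTranspose]
    have hRt : Rᴴ = !![(ca : ℂ), (sb : ℂ); -(sb : ℂ), (ca : ℂ)] := by
      ext i j
      fin_cases i <;> fin_cases j <;>
        simp [R, Matrix.conjTranspose_apply, Complex.conj_ofReal]
    rw [hRt]
    show (_ * R) = _
    rw [show R = !![(ca : ℂ), -(sb : ℂ); (sb : ℂ), (ca : ℂ)] from rfl,
      Matrix.mul_fin_two, Matrix.one_fin_two]
    ext i j
    fin_cases i <;> fin_cases j <;> simp
    · exact h1C
    · ring
    · ring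
    · linear_combination h1C
  let G : Matrix (Fin 2 × (Fin (2 ^ m) × Fin (2 ^ s)))
      (Fin 2 × (Fin (2 ^ m) × Fin (2 ^ s))) ℂ :=
    R ⊗ₖ (1 : Matrix (Fin (2 ^ m) × Fin (2 ^ s)) (Fin (2 ^ m) × Fin (2 ^ s)) ℂ)
  have hG : G ∈ Matrix.unitaryGroup (Fin 2 × (Fin (2 ^ m) × Fin (2 ^ s))) ℂ :=
    kronecker_one_mem_unitaryGroup hR
  let W₀ := Gᴴ * Sel * G
  have hW₀ : W₀ ∈ Matrix.unitaryGroup (Fin 2 × (Fin (2 ^ m) × Fin (2 ^ s))) ℂ := by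
    have hGstar : Gᴴ ∈ Matrix.unitaryGroup (Fin 2 × (Fin (2 ^ m) × Fin (2 ^ s))) ℂ := by
      rw [← Matrix.star_eq_conjTranspose]
      exact Unitary.star_mem hG
    exact mul_mem (mul_mem hGstar hSel) hG
  -- the key sum computation
  have hGapp : ∀ (c c' : Fin 2) (y y' : Fin (2 ^ m) × Fin (2 ^ s)),
      G (c, y) (c', y') = R c c' * (if y = y' then 1 else 0) := by
    intro c c' y y'
    simp [G, Matrix.kroneckerMap_apply, Matrix.one_apply]
  have hSG : ∀ (c : Fin 2) (y y₁), (Sel * G) (c, y) (0, y₁) = M c y y₁ * R c 0 := by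
    intro c y y₁
    rw [Matrix.mul_apply, Fintype.sum_prod_type]
    rw [Finset.sum_eq_single c]
    · rw [Finset.sum_eq_single y₁]
      · rw [hSelApp, hGapp]; simp
      · intro y' _ hy'
        rw [hSelApp, hGapp]; simp [hy']
      · intro h; exact absurd (Finset.mem_univ _) h
    · intro c' _ hc'
      apply Finset.sum_eq_zero; intro y' _
      rw [hSelApp]; simp [Ne.symm hc']
    · intro h; exact absurd (Finset.mem_univ _) h
  have hW₀app : ∀ (y₀ y₁ : Fin (2 ^ m) × Fin (2 ^ s)),
      W₀ (0, y₀) (0, y₁) =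
        ∑ c : Fin 2, (starRingEnd ℂ) (R c 0) * (M c y₀ y₁ * R c 0) := by
    intro y₀ y₁
    show (Gᴴ * Sel * G) (0, y₀) (0, y₁) = _
    rw [mul_assoc, Matrix.mul_apply, Fintype.sum_prod_type]
    apply Finset.sum_congr rfl
    intro c _
    rw [Finset.sum_eq_single y₀]
    · rw [hSG, Matrix.conjTranspose_apply, hGapp]; simp
    · intro y' _ hy'
      rw [Matrix.conjTranspose_apply, hGapp]
      simp [hy']
    · intro h; exact absurd (Finset.mem_univ _) h
  -- final unitary
  let F : Fin 2 × (Fin (2 ^ m) × Fin (2 ^ s)) ≃ Fin (2 ^ (m + 1)) × Fin (2 ^ s) :=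
    (Equiv.prodAssoc _ _ _).symm.trans
      ((finProdFinEquiv.trans (finCongr h2m)).prodCongr (Equiv.refl _))
  have hF0 : ∀ i : Fin (2 ^ s), F.symm (0, i) = (0, (0, i)) := by
    intro i
    apply F.injective
    rw [Equiv.apply_symm_apply]
    have h0 : (finProdFinEquiv.trans (finCongr h2m)) ((0 : Fin 2), (0 : Fin (2 ^ m))) = 0 := by
      apply Fin.ext
      simp [finProdFinEquiv]
    have h : F (0, (0, i)) = ((finProdFinEquiv.trans (finCongr h2m)) (0, 0), i) := rfl
    rw [h, h0]
  refine ⟨Matrix.reindex F F W₀, reindex_mem_unitaryGroup F hW₀, ?_⟩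
  have hkey : ∀ i j, (Matrix.reindex F F W₀) (0, i) (0, j) =
      ((α / (α + β) : ℝ) : ℂ) * UA (0, i) (0, j) +
      ((β / (α + β) : ℝ) : ℂ) * UB (0, i) (0, j) := by
    intro i j
    rw [Matrix.reindex_apply, Matrix.submatrix_apply, hF0, hF0, hW₀app,
      Fin.sum_univ_two]
    have hR00 : R 0 0 = (ca : ℂ) := by simp [R]
    have hR10 : R 1 0 = (sb : ℂ) := by simp [R]
    have hM0 : M 0 = UAm := rfl
    have hM1 : M 1 = UBm := rfl
    rw [hR00, hR10, hM0, hM1, hUAm0, hUBm0, Complex.conj_ofReal, Complex.conj_ofReal]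
    push_cast [← hca2, ← hsb2]
    ring
  -- norm bound
  have hsplit : (A + B) - ((α + β : ℝ) : ℂ) •
      Matrix.of (fun i j => (Matrix.reindex F F W₀) ((0 : Fin (2 ^ (m + 1))), i)
        ((0 : Fin (2 ^ (m + 1))), j)) =
      (A - (α : ℂ) • Matrix.of (fun i j => UA ((0 : Fin (2 ^ a)), i) ((0 : Fin (2 ^ a)), j))) +
      (B - (β : ℂ) • Matrix.of (fun i j => UB ((0 : Fin (2 ^ b)), i) ((0 : Fin (2 ^ b)), j))) := by
    ext i j
    simp only [Matrix.sub_apply, Matrix.add_apply, Matrix.smul_apply, Matrix.of_apply,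
      smul_eq_mul, hkey]
    have hne : (α : ℂ) + (β : ℂ) ≠ 0 := by
      have : ((α + β : ℝ) : ℂ) ≠ 0 := by exact_mod_cast ne_of_gt hαβ
      push_cast at this
      exact this
    push_cast
    field_simp
    ring
  rw [hsplit]
  calc ‖_ + _‖ ≤ _ + _ := norm_add_le _ _
    _ ≤ δ + ε := add_le_add hA hB
end

section
/- Let A ∈ ℂ^{m×n} be nonzero with rows A_{i,·}. Suppose U_L and U_R are unitaries on ℂ^{2^s} ⊗ ℂ^{2^s} (with m,n ≤ 2^s) satisfying U_L |0^s⟩|j⟩ = (1/‖A‖_F) Σ_{i=1}^m ‖A_{i,·}‖ |i⟩|j⟩ for all j ≤ n and U_R |i⟩|0^s⟩ = |i⟩ (1/‖A_{i,·}‖) Σ_{j=1}^n A_{i,j} |j⟩ for all i ≤ m with A_{i,·} ≠ 0. Then ⟨i|⟨0^s| U_L† U_R |0^s⟩|j⟩ = A_{i,j}/‖A‖_F for all such i,j; hence U_L† U_R is a (‖A‖_F, s)-block-encoding of A. -/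
open Matrix
open scoped Matrix.Norms.L2Operator

/-- Block encoding of a matrix stored in a quantum data structure: if `U_L` prepares the
row-norm state and `U_R` prepares the normalized rows, then the corresponding matrix entry of
`U_L† U_R` equals `A i j / ‖A‖_F`; hence `U_L† U_R` is a `(‖A‖_F, s)`-block-encoding of `A`. -/
theorem stmt_2 (s m n : ℕ) (hm : m ≤ 2 ^ s) (hn : n ≤ 2 ^ s)
    (A : Matrix (Fin m) (Fin n) ℂ) (hA : A ≠ 0)
    (UL UR : Matrix ((Fin (2 ^ s)) × (Fin (2 ^ s))) ((Fin (2 ^ s)) × (Fin (2 ^ s))) ℂ)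
    (hUL : UL ∈ Matrix.unitaryGroup ((Fin (2 ^ s)) × (Fin (2 ^ s))) ℂ)
    (hUR : UR ∈ Matrix.unitaryGroup ((Fin (2 ^ s)) × (Fin (2 ^ s))) ℂ)
    -- `U_L |0^s⟩|j⟩ = (1/‖A‖_F) ∑ i ‖A_{i,·}‖ |i⟩|j⟩`
    (hL : ∀ j : Fin n,
      UL.mulVec (Pi.single (M := fun _ : Fin (2 ^ s) × Fin (2 ^ s) => ℂ)
          ((0 : Fin (2 ^ s)), Fin.castLE hn j) 1) =
        ∑ i : Fin m,
          ((Real.sqrt (∑ j' : Fin n, ‖A i j'‖ ^ 2) /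
              Real.sqrt (∑ i' : Fin m, ∑ j' : Fin n, ‖A i' j'‖ ^ 2) : ℝ) : ℂ) •
            Pi.single (M := fun _ : Fin (2 ^ s) × Fin (2 ^ s) => ℂ)
              (Fin.castLE hm i, Fin.castLE hn j) 1)
    -- `U_R |i⟩|0^s⟩ = |i⟩ (1/‖A_{i,·}‖) ∑ j A_{i,j} |j⟩` for every nonzero row `i`
    (hR : ∀ i : Fin m, (∃ j : Fin n, A i j ≠ 0) →
      UR.mulVec (Pi.single (M := fun _ : Fin (2 ^ s) × Fin (2 ^ s) => ℂ)
          (Fin.castLE hm i, (0 : Fin (2 ^ s))) 1) =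
        ∑ j : Fin n,
          (A i j / ((Real.sqrt (∑ j' : Fin n, ‖A i j'‖ ^ 2) : ℝ) : ℂ)) •
            Pi.single (M := fun _ : Fin (2 ^ s) × Fin (2 ^ s) => ℂ)
              (Fin.castLE hm i, Fin.castLE hn j) 1) :
    ∀ i : Fin m, ∀ j : Fin n, (∃ j' : Fin n, A i j' ≠ 0) →
      (ULᴴ * UR) ((0 : Fin (2 ^ s)), Fin.castLE hn j) (Fin.castLE hm i, (0 : Fin (2 ^ s))) =
        A i j / ((Real.sqrt (∑ i' : Fin m, ∑ j' : Fin n, ‖A i' j'‖ ^ 2) : ℝ) : ℂ) := by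
  intro i j hij
  have hri : (0:ℝ) < ∑ j' : Fin n, ‖A i j'‖ ^ 2 := by
    obtain ⟨j', hj'⟩ := hij
    apply Finset.sum_pos'
    · intro k _; positivity
    · exact ⟨j', Finset.mem_univ _, pow_pos (norm_pos_iff.mpr hj') 2⟩
  have hri' : (Real.sqrt (∑ j' : Fin n, ‖A i j'‖ ^ 2) : ℂ) ≠ 0 := by
    simpa using (Real.sqrt_pos.mpr hri).ne'
  have hvL : ∀ k, UL k ((0 : Fin (2 ^ s)), Fin.castLE hn j) =
      ∑ i' : Fin m,
        ((Real.sqrt (∑ j' : Fin n, ‖A i' j'‖ ^ 2) /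
            Real.sqrt (∑ i'' : Fin m, ∑ j' : Fin n, ‖A i'' j'‖ ^ 2) : ℝ) : ℂ) *
          Pi.single (M := fun _ : Fin (2 ^ s) × Fin (2 ^ s) => ℂ)
            (Fin.castLE hm i', Fin.castLE hn j) 1 k := by
    intro k
    have := congrFun (hL j) k
    simpa [Matrix.mulVec, dotProduct, Pi.single_apply, Finset.sum_apply] using this
  have hvR : ∀ k, UR k (Fin.castLE hm i, (0 : Fin (2 ^ s))) =
      ∑ j' : Fin n,
        (A i j' / ((Real.sqrt (∑ j'' : Fin n, ‖A i j''‖ ^ 2) : ℝ) : ℂ)) *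
          Pi.single (M := fun _ : Fin (2 ^ s) × Fin (2 ^ s) => ℂ)
            (Fin.castLE hm i, Fin.castLE hn j') 1 k := by
    intro k
    have := congrFun (hR i hij) k
    simpa [Matrix.mulVec, dotProduct, Pi.single_apply, Finset.sum_apply] using this
  rw [Matrix.mul_apply]
  simp only [Matrix.conjTranspose_apply, hvL, hvR]
  have hinj : Function.Injective (Fin.castLE hm) := Fin.castLE_injective hm
  have hinj' : Function.Injective (Fin.castLE hn) := Fin.castLE_injective hn
  simp only [Pi.single_apply, mul_ite, mul_one, mul_zero, ite_mul, zero_mul,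
    Finset.sum_ite_eq', Finset.mem_univ, if_true, star_sum, star_mul',
    star_one, star_zero, apply_ite (star : ℂ → ℂ)]
  rw [Finset.sum_comm]
  have hF : (0:ℝ) < ∑ y : Fin n, ∑ x : Fin m, ‖A x y‖ ^ 2 := by
    rw [Finset.sum_comm]
    calc (0:ℝ) < ∑ j' : Fin n, ‖A i j'‖ ^ 2 := hri
    _ ≤ _ := Finset.single_le_sum (f := fun i' : Fin m => ∑ j' : Fin n, ‖A i' j'‖ ^ 2)
        (fun _ _ => by positivity) (Finset.mem_univ i)
  have hF' : (Real.sqrt (∑ y : Fin n, ∑ x : Fin m, ‖A x y‖ ^ 2) : ℂ) ≠ 0 := by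
    simpa using (Real.sqrt_pos.mpr hF).ne'
  rw [Finset.sum_eq_single ((Fin.castLE hm i : Fin (2^s)), (Fin.castLE hn j : Fin (2^s)))]
  · simp only [Prod.mk.injEq, hinj.eq_iff, hinj'.eq_iff, and_true, true_and]
    simp only [Finset.sum_ite_eq, Finset.mem_univ, if_true]
    rw [show (star ((Real.sqrt ((∑ j' : Fin n, ‖A i j'‖ ^ 2)) / Real.sqrt (∑ y : Fin n, ∑ x : Fin m, ‖A x y‖ ^ 2) : ℝ) : ℂ)) = ((Real.sqrt ((∑ j' : Fin n, ‖A i j'‖ ^ 2)) / Real.sqrt (∑ y : Fin n, ∑ x : Fin m, ‖A x y‖ ^ 2) : ℝ) : ℂ) from Complex.conj_ofReal _]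
    have hr2 : ((Real.sqrt (∑ x : Fin n, ‖A i x‖ ^ 2) : ℝ) : ℂ) ≠ 0 := by
      exact hri'
    push_cast
    field_simp [hr2]
  · rintro ⟨b1, b2⟩ _ hb
    rcases eq_or_ne b1 (Fin.castLE hm i) with h1 | h1
    · subst h1
      have h2 : b2 ≠ Fin.castLE hn j := fun h => hb (by rw [h])
      apply mul_eq_zero_of_left
      apply Finset.sum_eq_zero; intro x _
      exact if_neg fun h => h2 (congrArg Prod.snd h)
    · apply mul_eq_zero_of_right
      apply Finset.sum_eq_zero; intro x _
      exact if_neg fun h => h1 (congrArg Prod.fst h)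
  · intro h; exact absurd (Finset.mem_univ _) h
end

section
/- Let A be an invertible n×n complex matrix with all singular values in [1/κ, 1], and let p be an odd polynomial with |p(x) − 1/(κβ x)| ≤ ε for all x ∈ [1/κ, 1] and |p(x)| ≤ 1 on [1/κ,1]. Then ‖κβ · p_SV(A†) − A^{-1}‖ ≤ κβε, where p_SV(A†) = V p(Σ) W† for any SVD A = W Σ V†. -/
open Matrix
open scoped Matrix.Norms.L2Operator

lemma diag_norm_le {n : ℕ} (v : Fin n → ℂ) (c : ℝ) (hc : 0 ≤ c)
    (h : ∀ i, ‖v i‖ ≤ c) : ‖Matrix.diagonal v‖ ≤ c := by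
  rw [Matrix.l2_opNorm_def]
  refine ContinuousLinearMap.opNorm_le_bound _ hc fun x => ?_
  have hval : ((Matrix.toEuclideanLin (𝕜 := ℂ) (m := Fin n) (n := Fin n)).trans LinearMap.toContinuousLinearMap
      (Matrix.diagonal v)) x = (WithLp.equiv 2 (Fin n → ℂ)).symm
        (Matrix.diagonal v *ᵥ (WithLp.equiv 2 (Fin n → ℂ)) x) := rfl
  rw [hval, EuclideanSpace.norm_eq]
  have hxn : ‖x‖ = Real.sqrt (∑ i, ‖x i‖ ^ 2) := EuclideanSpace.norm_eq x
  rw [hxn, ← Real.sqrt_sq hc, ← Real.sqrt_mul (sq_nonneg c)]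
  refine Real.sqrt_le_sqrt ?_
  rw [Finset.mul_sum]
  refine Finset.sum_le_sum fun i _ => ?_
  have : (WithLp.equiv 2 (Fin n → ℂ)).symm (Matrix.diagonal v *ᵥ (WithLp.equiv 2 (Fin n → ℂ)) x) i
      = v i * x i := by
    simp [Matrix.mulVec_diagonal]
  rw [this, norm_mul, mul_pow]
  have h1 : ‖v i‖ ^ 2 ≤ c ^ 2 := by
    have := h i; nlinarith [norm_nonneg (v i)]
  nlinarith [sq_nonneg ‖x i‖, norm_nonneg (x i)]

lemma unit_norm_le {n : ℕ} (U : Matrix (Fin n) (Fin n) ℂ)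
    (hU : U ∈ Matrix.unitaryGroup (Fin n) ℂ) : ‖U‖ ≤ 1 := by
  have h1 : Uᴴ * U = 1 := hU.1
  have h2 : ‖Uᴴ * U‖ = ‖U‖ * ‖U‖ := Matrix.l2_opNorm_conjTranspose_mul_self U
  have h3 : ‖(1 : Matrix (Fin n) (Fin n) ℂ)‖ ≤ 1 := by
    rw [Matrix.cstar_norm_def, _root_.map_one]
    exact ContinuousLinearMap.norm_id_le
  rw [h1] at h2; nlinarith [norm_nonneg U]

/-- Matrix inversion by QSVT: if all singular values of `A` lie in `[1/κ, 1]` and `p` is an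
odd polynomial with `|p(x) - 1/(κβx)| ≤ ε` and `|p(x)| ≤ 1` on `[1/κ, 1]`, then
`‖κβ · p_SV(A†) - A⁻¹‖ ≤ κβε`, where `p_SV(A†) = V p(Σ) W†` for an SVD `A = W Σ V†`. -/
theorem stmt_15 (n : ℕ) (κ β ε : ℝ) (hκ : 1 ≤ κ) (hβ : 0 < β) (hε : 0 < ε)
    (A W V : Matrix (Fin n) (Fin n) ℂ) (d : Fin n → ℝ)
    (hW : W ∈ Matrix.unitaryGroup (Fin n) ℂ)
    (hV : V ∈ Matrix.unitaryGroup (Fin n) ℂ)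
    (hd : ∀ i, d i ∈ Set.Icc (1 / κ) 1)
    (hSVD : A = W * Matrix.diagonal (fun i => (d i : ℂ)) * Vᴴ)
    (hAinv : IsUnit A.det)
    (p : Polynomial ℝ)
    (hodd : ∀ x : ℝ, p.eval (-x) = -p.eval x)
    (happrox : ∀ x ∈ Set.Icc (1 / κ) 1, |p.eval x - 1 / (κ * β * x)| ≤ ε)
    (hbound : ∀ x ∈ Set.Icc (1 / κ) 1, |p.eval x| ≤ 1) :
    ‖((κ * β : ℝ) : ℂ) • (V * Matrix.diagonal (fun i => ((p.eval (d i) : ℝ) : ℂ)) * Wᴴ)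
        - A⁻¹‖ ≤ κ * β * ε := by
  have hκ0 : 0 < κ := lt_of_lt_of_le one_pos hκ
  have hκβ : 0 < κ * β := mul_pos hκ0 hβ
  have hdpos : ∀ i, 0 < d i := fun i => lt_of_lt_of_le (by positivity) (hd i).1
  have hdne : ∀ i, (d i : ℂ) ≠ 0 := fun i => by
    exact_mod_cast Complex.ofReal_ne_zero.mpr (hdpos i).ne'
  -- inverse formula
  have hinv : A⁻¹ = V * Matrix.diagonal (fun i => ((d i : ℂ))⁻¹) * Wᴴ := by
    refine Matrix.inv_eq_right_inv ?_
    rw [hSVD]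
    have hVV : Vᴴ * V = 1 := hV.1
    have hWW : W * Wᴴ = 1 := hW.2
    calc W * Matrix.diagonal (fun i => (d i : ℂ)) * Vᴴ *
          (V * Matrix.diagonal (fun i => ((d i : ℂ))⁻¹) * Wᴴ)
        = W * Matrix.diagonal (fun i => (d i : ℂ)) * (Vᴴ * V) *
            Matrix.diagonal (fun i => ((d i : ℂ))⁻¹) * Wᴴ := by noncomm_ring
      _ = W * (Matrix.diagonal (fun i => (d i : ℂ)) *
            Matrix.diagonal (fun i => ((d i : ℂ))⁻¹)) * Wᴴ := by rw [hVV]; noncomm_ring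
      _ = W * Wᴴ := by
            rw [Matrix.diagonal_mul_diagonal]
            have : (fun i => (d i : ℂ) * ((d i : ℂ))⁻¹) = fun _ => (1 : ℂ) := by
              funext i; exact mul_inv_cancel₀ (hdne i)
            rw [this, Matrix.diagonal_one, mul_one]
      _ = 1 := hWW
  -- rewrite difference
  have hdiff : ((κ * β : ℝ) : ℂ) • (V * Matrix.diagonal (fun i => ((p.eval (d i) : ℝ) : ℂ)) * Wᴴ)
      - A⁻¹ = V * Matrix.diagonal
        (fun i => ((κ * β : ℝ) : ℂ) * ((p.eval (d i) : ℝ) : ℂ) - ((d i : ℂ))⁻¹) * Wᴴ := by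
    rw [hinv]
    have e1 : Matrix.diagonal (fun i => ((κ * β : ℝ) : ℂ) * ((p.eval (d i) : ℝ) : ℂ) - ((d i : ℂ))⁻¹)
        = ((κ * β : ℝ) : ℂ) • Matrix.diagonal (fun i => ((p.eval (d i) : ℝ) : ℂ))
          - Matrix.diagonal (fun i => ((d i : ℂ))⁻¹) := by
      ext i j
      rcases eq_or_ne i j with h | h
      · subst h; simp
      · simp [Matrix.diagonal_apply_ne _ h]
    rw [e1, Matrix.mul_sub, Matrix.sub_mul, Matrix.mul_smul, Matrix.smul_mul]
  rw [hdiff]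
  -- bound
  have hDb : ‖Matrix.diagonal
      (fun i => ((κ * β : ℝ) : ℂ) * ((p.eval (d i) : ℝ) : ℂ) - ((d i : ℂ))⁻¹)‖ ≤ κ * β * ε := by
    refine diag_norm_le _ _ (by positivity) fun i => ?_
    have : ((κ * β : ℝ) : ℂ) * ((p.eval (d i) : ℝ) : ℂ) - ((d i : ℂ))⁻¹
        = ((κ * β * p.eval (d i) - (d i)⁻¹ : ℝ) : ℂ) := by push_cast; ring
    rw [this, Complex.norm_real]
    have h1 := happrox (d i) (hd i)
    have h2 : κ * β * p.eval (d i) - (d i)⁻¹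
        = (κ * β) * (p.eval (d i) - 1 / (κ * β * d i)) := by
      have hd0 : d i ≠ 0 := (hdpos i).ne'
      have hk0 : κ ≠ 0 := hκ0.ne'
      have hb0 : β ≠ 0 := hβ.ne'
      field_simp
    rw [h2, Real.norm_eq_abs, abs_mul, abs_of_pos hκβ]
    exact mul_le_mul_of_nonneg_left h1 hκβ.le
  calc ‖V * Matrix.diagonal
          (fun i => ((κ * β : ℝ) : ℂ) * ((p.eval (d i) : ℝ) : ℂ) - ((d i : ℂ))⁻¹) * Wᴴ‖
      ≤ ‖V * Matrix.diagonal
          (fun i => ((κ * β : ℝ) : ℂ) * ((p.eval (d i) : ℝ) : ℂ) - ((d i : ℂ))⁻¹)‖ * ‖Wᴴ‖ :=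
        Matrix.l2_opNorm_mul _ _
    _ ≤ ‖V‖ * ‖Matrix.diagonal
          (fun i => ((κ * β : ℝ) : ℂ) * ((p.eval (d i) : ℝ) : ℂ) - ((d i : ℂ))⁻¹)‖ * ‖Wᴴ‖ := by
        refine mul_le_mul_of_nonneg_right (Matrix.l2_opNorm_mul _ _) (norm_nonneg _)
    _ ≤ 1 * (κ * β * ε) * 1 := by
        refine mul_le_mul ?_ ?_ (norm_nonneg _) (by positivity)
        · exact mul_le_mul (unit_norm_le V hV) hDb (norm_nonneg _) zero_le_one
        · rw [Matrix.l2_opNorm_conjTranspose]; exact unit_norm_le W hW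
    _ = κ * β * ε := by ring
end
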